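/- Let Γ_k⁺ = {κ ∈ ℝ^m : e_l(κ) > 0 for all 1 ≤ l ≤ k} be the Garding cone. If κ ∈ ℝ^m satisfies e_k(κ) > 0 and κ lies in the connected component of {κ : e_k(κ) > 0} containing the point (1,1,…,1), then e_l(κ) > 0 for all 1 ≤ l ≤ k. -/

import Mathlib

open Polynomial

/-- The `j`-th elementary symmetric polynomial of `κ₁, …, κ_m`. -/
def esymmF (m j : ℕ) (κ : Fin m → ℝ) : ℝ :=
  ∑ s ∈ Finset.powersetCard j Finset.univ, ∏ i ∈ s, κ i

noncomputable def Pgen (m : ℕ) (κ : Fin m → ℝ) : ℝ[X] :=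
  ∏ i : Fin m, (C (κ i) * X + 1)

lemma coeff_Pgen (m : ℕ) (κ : Fin m → ℝ) (j : ℕ) :
    (Pgen m κ).coeff j = esymmF m j κ := by
  classical
  rw [Pgen, Finset.prod_add, esymmF, finset_sum_coeff,
    Finset.powersetCard_eq_filter, Finset.sum_filter]
  refine Finset.sum_congr rfl fun b _ => ?_
  rw [Finset.prod_const_one, mul_one, Finset.prod_mul_distrib, Finset.prod_const,
    ← map_prod C κ b, coeff_C_mul, coeff_X_pow]
  simp [eq_comm, mul_ite]

lemma derivSq_multiset (s : Multiset ℝ) (c : ℝ) (x : ℝ) :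
    (C c * (s.map fun r => X - C r).prod).eval x *
      (derivative (derivative (C c * (s.map fun r => X - C r).prod))).eval x ≤
      ((derivative (C c * (s.map fun r => X - C r).prod)).eval x) ^ 2 := by
  induction s using Multiset.induction with
  | empty => simp
  | cons r t ih =>
    have hre : C c * ((r ::ₘ t).map fun r => X - C r).prod
        = (X - C r) * (C c * (t.map fun r => X - C r).prod) := by
      rw [Multiset.map_cons, Multiset.prod_cons]; ring
    rw [hre]
    set g := C c * (t.map fun r => X - C r).prod with hg
    have e1 : derivative ((X - C r) * g) = g + (X - C r) * derivative g := by
      rw [derivative_mul]; simp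
    have e2 : derivative (g + (X - C r) * derivative g)
        = 2 * derivative g + (X - C r) * derivative (derivative g) := by
      rw [derivative_add, derivative_mul]; simp; ring
    rw [e1, e2]
    simp only [eval_mul, eval_add, eval_sub, eval_X, eval_C, eval_ofNat]
    nlinarith [sq_nonneg (g.eval x), mul_le_mul_of_nonneg_left ih (sq_nonneg (x - r))]

lemma derivSq (p : ℝ[X]) (hp : Multiset.card p.roots = p.natDegree) (x : ℝ) :
    p.eval x * (derivative (derivative p)).eval x ≤ ((derivative p).eval x) ^ 2 := by
  by_cases h0 : p = 0
  · simp [h0]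
  · rw [← C_leadingCoeff_mul_prod_multiset_X_sub_C hp]
    exact derivSq_multiset _ _ x

lemma roots_card_iterate (p : ℝ[X]) (t : ℕ) :
    Multiset.card p.roots ≤ Multiset.card (derivative^[t] p).roots + t := by
  induction t with
  | zero => simp
  | succ t ih =>
    rw [Function.iterate_succ_apply']
    calc Multiset.card p.roots ≤ Multiset.card (derivative^[t] p).roots + t := ih
    _ ≤ (Multiset.card (derivative (derivative^[t] p)).roots + 1) + t :=
        Nat.add_le_add_right (card_roots_le_derivative _) t
    _ = Multiset.card (derivative (derivative^[t] p)).roots + (t+1) := by omega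

lemma realrooted_iterate (p : ℝ[X]) (hp : Multiset.card p.roots = p.natDegree) (t : ℕ) :
    Multiset.card (derivative^[t] p).roots = (derivative^[t] p).natDegree := by
  have h1 := roots_card_iterate p t
  have h2 := natDegree_iterate_derivative p t
  have h3 := card_roots' (derivative^[t] p)
  omega

lemma lin_ne_zero (a : ℝ) : C a * X + 1 ≠ 0 := fun h => by
  simpa using congrArg (eval 0) h

lemma lin_factor (a : ℝ) (ha : a ≠ 0) : C a * X + 1 = C a * (X - C (-a⁻¹)) := by
  rw [mul_sub, ← C_mul, mul_neg, mul_inv_cancel₀ ha, map_neg, map_one]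
  ring

lemma lin_card_roots (a : ℝ) :
    Multiset.card (C a * X + 1).roots = (C a * X + 1).natDegree := by
  by_cases ha : a = 0
  · simp [ha]
  · rw [lin_factor a ha, roots_C_mul _ (by simpa using ha), roots_X_sub_C,
      natDegree_C_mul (by simpa using ha), natDegree_X_sub_C]
    simp

lemma realrooted_Pgen (m : ℕ) (κ : Fin m → ℝ) :
    Multiset.card (Pgen m κ).roots = (Pgen m κ).natDegree := by
  rw [Pgen, Polynomial.roots_prod _ _ (by
      rw [Finset.prod_ne_zero_iff]; exact fun i _ => lin_ne_zero (κ i)),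
    natDegree_prod _ _ (fun i _ => lin_ne_zero (κ i)), Multiset.card_bind]
  simp only [Finset.sum_map_val]
  exact Finset.sum_congr rfl fun i _ => lin_card_roots (κ i)

lemma eval_zero_iter_deriv (p : ℝ[X]) (t : ℕ) :
    (derivative^[t] p).eval 0 = (t.factorial : ℝ) * p.coeff t := by
  rw [← coeff_zero_eq_eval_zero, coeff_iterate_derivative]
  simp [Nat.descFactorial_self, nsmul_eq_mul]

lemma newton_light (n l : ℕ) (w : Fin n → ℝ) :
    ((l.factorial : ℝ) * esymmF n l w) * (((l+2).factorial : ℝ) * esymmF n (l+2) w)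
      ≤ (((l+1).factorial : ℝ) * esymmF n (l+1) w) ^ 2 := by
  have key := derivSq (derivative^[l] (Pgen n w))
    (realrooted_iterate _ (realrooted_Pgen n w) l) 0
  rw [← Function.iterate_succ_apply' derivative l,
    ← Function.iterate_succ_apply' derivative (l+1)] at key
  rw [eval_zero_iter_deriv, eval_zero_iter_deriv, eval_zero_iter_deriv,
    coeff_Pgen, coeff_Pgen, coeff_Pgen] at key
  exact key

lemma esymm_logconcave (n l : ℕ) (w : Fin n → ℝ) (h0 : 0 ≤ esymmF n l w)
    (h2 : 0 ≤ esymmF n (l+2) w) :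
    esymmF n l w * esymmF n (l+2) w ≤ esymmF n (l+1) w ^ 2 := by
  have key := newton_light n l w
  have hfacN : (l+1).factorial * (l+1).factorial ≤ l.factorial * (l+2).factorial := by
    rw [Nat.factorial_succ (l+1)]
    calc (l+1).factorial * (l+1).factorial = (l+1) * l.factorial * (l+1).factorial := by
          rw [Nat.factorial_succ]
    _ ≤ (l+2) * l.factorial * (l+1).factorial := by
          exact Nat.mul_le_mul_right _ (Nat.mul_le_mul_right _ (by omega))
    _ = l.factorial * ((l+2) * (l+1).factorial) := by ring
  have hfac : ((l+1).factorial : ℝ) * ((l+1).factorial : ℝ)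
      ≤ (l.factorial : ℝ) * ((l+2).factorial : ℝ) := by exact_mod_cast hfacN
  have f1 : (0:ℝ) < l.factorial := by exact_mod_cast Nat.factorial_pos l
  have f3 : (0:ℝ) < (l+2).factorial := by exact_mod_cast Nat.factorial_pos (l+2)
  have hmul : (l.factorial : ℝ) * ((l+2).factorial) * (esymmF n l w * esymmF n (l+2) w)
      ≤ (l.factorial : ℝ) * ((l+2).factorial) * (esymmF n (l+1) w ^ 2) := by
    nlinarith [key, mul_le_mul_of_nonneg_right hfac (sq_nonneg (esymmF n (l+1) w)),
      mul_nonneg h0 h2]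
  exact le_of_mul_le_mul_left hmul (by positivity)

lemma esymmF_zero (m : ℕ) (κ : Fin m → ℝ) : esymmF m 0 κ = 1 := by
  simp [esymmF]

lemma esymmF_of_gt (m j : ℕ) (κ : Fin m → ℝ) (h : m < j) : esymmF m j κ = 0 := by
  rw [esymmF, Finset.powersetCard_eq_empty.mpr (by simpa using h), Finset.sum_empty]

lemma esymmF_perm (m j : ℕ) (κ : Fin m → ℝ) (σ : Equiv.Perm (Fin m)) :
    esymmF m j (κ ∘ σ) = esymmF m j κ := by
  rw [← coeff_Pgen, ← coeff_Pgen]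
  congr 1
  rw [Pgen, Pgen, ← Equiv.prod_comp σ (fun i => C (κ i) * X + 1)]
  rfl

lemma esymmF_succ (m : ℕ) (κ : Fin (m+1) → ℝ) (j : ℕ) :
    esymmF (m+1) (j+1) κ
      = esymmF m (j+1) (κ ∘ Fin.castSucc) + κ (Fin.last m) * esymmF m j (κ ∘ Fin.castSucc) := by
  rw [← coeff_Pgen, ← coeff_Pgen, ← coeff_Pgen]
  have hP : Pgen (m+1) κ = Pgen m (κ ∘ Fin.castSucc) * (C (κ (Fin.last m)) * X + 1) := by
    rw [Pgen, Fin.prod_univ_castSucc]; rfl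
  have hsplit : Pgen m (κ ∘ Fin.castSucc) * (C (κ (Fin.last m)) * X + 1)
      = Pgen m (κ ∘ Fin.castSucc)
        + C (κ (Fin.last m)) * (Pgen m (κ ∘ Fin.castSucc) * X) := by ring
  rw [hP, hsplit, coeff_add, coeff_C_mul, coeff_mul_X]

lemma esymmF_pos_of_pos (m j : ℕ) (κ : Fin m → ℝ) (hκ : ∀ i, 0 < κ i) (hj : j ≤ m) :
    0 < esymmF m j κ := by
  rw [esymmF]
  refine Finset.sum_pos (fun s _ => Finset.prod_pos fun i _ => hκ i) ?_
  exact Finset.powersetCard_nonempty.mpr (by simpa using hj)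

lemma gammaPos : ∀ (m k : ℕ), 1 ≤ k → k ≤ m → ∀ κ : Fin m → ℝ,
    (∀ l, 1 ≤ l → l ≤ k → 0 ≤ esymmF m l κ) → 0 < esymmF m k κ →
    ∀ l, 1 ≤ l → l ≤ k → 0 < esymmF m l κ := by
  intro m
  induction m with
  | zero => intro k hk1 hk2; omega
  | succ m IH =>
    intro k hk1 hk2 κ hnn hpos
    by_cases hall : ∀ i, 0 < κ i
    · intro l hl1 hl2
      exact esymmF_pos_of_pos _ _ _ hall (le_trans hl2 hk2)
    · push_neg at hall
      obtain ⟨i, hi⟩ := hall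
      set σ := Equiv.swap i (Fin.last m) with hσ
      set κs : Fin (m+1) → ℝ := κ ∘ σ with hκs
      have hperm : ∀ j, esymmF (m+1) j κs = esymmF (m+1) j κ :=
        fun j => esymmF_perm (m+1) j κ σ
      have hlast : κs (Fin.last m) ≤ 0 := by
        have : κs (Fin.last m) = κ i := by
          simp [hκs, hσ, Equiv.swap_apply_right]
        rw [this]; exact hi
      have hnn' : ∀ l, 1 ≤ l → l ≤ k → 0 ≤ esymmF (m+1) l κs := by
        intro l h1 h2; rw [hperm]; exact hnn l h1 h2
      have hpos' : 0 < esymmF (m+1) k κs := by rw [hperm]; exact hpos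
      suffices h : ∀ l, 1 ≤ l → l ≤ k → 0 < esymmF (m+1) l κs by
        intro l h1 h2; rw [← hperm l]; exact h l h1 h2
      set w : Fin m → ℝ := κs ∘ Fin.castSucc with hw
      set c : ℝ := κs (Fin.last m) with hc
      have hrec : ∀ j, esymmF (m+1) (j+1) κs = esymmF m (j+1) w + c * esymmF m j w :=
        fun j => esymmF_succ m κs j
      -- key comparison
      have key : ∀ j, j ≤ k → esymmF (m+1) j κs ≤ esymmF m j w ∧ 0 ≤ esymmF m j w := by
        intro j
        induction j with
        | zero => intro _; simp [esymmF_zero]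
        | succ j ihj =>
          intro hjk
          have hj := ihj (by omega)
          have h0 : 0 ≤ esymmF (m+1) (j+1) κs := hnn' (j+1) (by omega) hjk
          constructor
          · rw [hrec j]
            nlinarith [hj.2, hlast]
          · have : esymmF (m+1) (j+1) κs ≤ esymmF m (j+1) w := by
              rw [hrec j]; nlinarith [hj.2, hlast]
            linarith
      -- k ≤ m
      have hkm : k ≤ m := by
        by_contra hcon
        have hkeq : k = m + 1 := by omega
        have h1 : esymmF (m+1) (m+1) κs = esymmF m (m+1) w + c * esymmF m m w := hrec m
        rw [esymmF_of_gt m (m+1) w (by omega)] at h1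
        have h2 : 0 ≤ esymmF m m w := (key m (by omega)).2
        have := hpos'
        rw [hkeq] at this
        nlinarith [hlast]
      -- apply IH to w
      have hposk : 0 < esymmF m k w := lt_of_lt_of_le hpos' (key k le_rfl).1
      have hposw : ∀ l, l ≤ k → 0 < esymmF m l w := by
        intro l hl
        rcases Nat.eq_zero_or_pos l with h | h
        · rw [h, esymmF_zero]; exact one_pos
        · exact IH k hk1 hkm w (fun l h1 h2 => (key l h2).2) hposk l h hl
      obtain ⟨k', rfl⟩ : ∃ k', k = k' + 1 := ⟨k - 1, by omega⟩
      -- ratio chain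
      have chain : ∀ d i, i + 1 + d = k' + 1 →
          esymmF m i w * esymmF m (k'+1) w ≤ esymmF m (i+1) w * esymmF m k' w := by
        intro d
        induction d with
        | zero =>
          intro i hi
          have : i = k' := by omega
          subst this
          exact le_of_eq (mul_comm _ _)
        | succ d ihd =>
          intro i hi
          have h2 := ihd (i+1) (by omega)
          have hlc := esymm_logconcave m i w (hposw i (by omega)).le (hposw (i+2) (by omega)).le
          have hp1 := hposw (i+1) (by omega)
          have hpk := hposw k' (by omega)
          have hpi := hposw i (by omega)
          have t1 : esymmF m i w * (esymmF m (i+1) w * esymmF m (k'+1) w)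
              ≤ esymmF m i w * (esymmF m (i+2) w * esymmF m k' w) :=
            mul_le_mul_of_nonneg_left h2 hpi.le
          have t2 : esymmF m i w * esymmF m (i+2) w * esymmF m k' w
              ≤ esymmF m (i+1) w ^ 2 * esymmF m k' w :=
            mul_le_mul_of_nonneg_right hlc hpk.le
          have hmul : esymmF m (i+1) w * (esymmF m i w * esymmF m (k'+1) w)
              ≤ esymmF m (i+1) w * (esymmF m (i+1) w * esymmF m k' w) := by nlinarith
          exact le_of_mul_le_mul_left hmul hp1
      -- conclude
      intro l hl1 hl2
      obtain ⟨j, rfl⟩ : ∃ j, l = j + 1 := ⟨l - 1, by omega⟩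
      rw [hrec j]
      have hchain := chain (k' - j) j (by omega)
      have hpj := hposw j (by omega)
      have hpk' := hposw k' (by omega)
      rw [hrec k'] at hpos'
      nlinarith [mul_pos hpj hpos', hchain]

lemma esymmF_continuous (m j : ℕ) : Continuous fun x : Fin m → ℝ => esymmF m j x := by
  unfold esymmF
  exact continuous_finset_sum _ fun s _ =>
    continuous_finset_prod _ fun i _ => continuous_apply i

lemma esymmF_one (m j : ℕ) (hj : j ≤ m) : 0 < esymmF m j (fun _ => (1:ℝ)) := by
  have : esymmF m j (fun _ => (1:ℝ)) = ((m.choose j : ℕ) : ℝ) := by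
    simp [esymmF, Finset.card_powersetCard]
  rw [this]
  exact_mod_cast Nat.choose_pos hj


/-- If `κ` lies in the connected component of `{e_k > 0}` containing `(1,…,1)`,
then `e_l(κ) > 0` for all `1 ≤ l ≤ k`, i.e. `κ` lies in the Garding cone `Γ_k⁺`. -/
theorem garding_cone_component (m k : ℕ) (hk1 : 1 ≤ k) (hk2 : k ≤ m) (κ : Fin m → ℝ)
    (hpos : 0 < esymmF m k κ)
    (hconn : κ ∈ connectedComponentIn {x : Fin m → ℝ | 0 < esymmF m k x} (fun _ => 1)) :
    ∀ l, 1 ≤ l → l ≤ k → 0 < esymmF m l κ := by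
  classical
  set U : Set (Fin m → ℝ) := {x | 0 < esymmF m k x} with hU
  set Γ : Set (Fin m → ℝ) := ⋂ l ∈ Finset.Icc 1 k, {x | 0 < esymmF m l x} with hΓ
  have hΓ_mem : ∀ x : Fin m → ℝ, x ∈ Γ ↔ ∀ l, 1 ≤ l → l ≤ k → 0 < esymmF m l x := by
    intro x
    simp only [hΓ, Set.mem_iInter, Finset.mem_Icc, Set.mem_setOf_eq]
    exact ⟨fun h l h1 h2 => h l ⟨h1, h2⟩, fun h l hl => h l hl.1 hl.2⟩
  have hΓ_open : IsOpen Γ :=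
    isOpen_biInter_finset fun l _ => isOpen_lt continuous_const (esymmF_continuous m l)
  set Cl : Set (Fin m → ℝ) := ⋂ l ∈ Finset.Icc 1 k, {x | 0 ≤ esymmF m l x} with hCl
  have hCl_closed : IsClosed Cl :=
    isClosed_biInter fun l _ => isClosed_le continuous_const (esymmF_continuous m l)
  have hΓCl : Γ ⊆ Cl := by
    intro x hx
    simp only [hCl, Set.mem_iInter, Finset.mem_Icc, Set.mem_setOf_eq]
    intro l hl
    exact ((hΓ_mem x).mp hx l hl.1 hl.2).le
  have honeU : (fun _ => (1:ℝ)) ∈ U := esymmF_one m k hk2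
  have honeΓ : (fun _ => (1:ℝ)) ∈ Γ :=
    (hΓ_mem _).mpr fun l _ h2 => esymmF_one m l (le_trans h2 hk2)
  set S := connectedComponentIn U (fun _ => (1:ℝ)) with hS
  have hSU : S ⊆ U := connectedComponentIn_subset _ _
  have hSpc : IsPreconnected S := isPreconnected_connectedComponentIn
  have h1S : (fun _ => (1:ℝ)) ∈ S := mem_connectedComponentIn honeU
  have hsub : ∀ x, x ∈ S → x ∈ closure Γ → x ∈ Γ := by
    intro x hxS hxcl
    have hx0 : ∀ l, 1 ≤ l → l ≤ k → 0 ≤ esymmF m l x := by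
      have := closure_minimal hΓCl hCl_closed hxcl
      simp only [hCl, Set.mem_iInter, Finset.mem_Icc, Set.mem_setOf_eq] at this
      exact fun l h1 h2 => this l ⟨h1, h2⟩
    exact (hΓ_mem x).mpr (gammaPos m k hk1 hk2 x hx0 (hSU hxS))
  have hclosure : S ⊆ closure Γ := by
    by_contra hno
    rw [Set.not_subset] at hno
    obtain ⟨y, hyS, hyn⟩ := hno
    have hcover : S ⊆ Γ ∪ (closure Γ)ᶜ := by
      intro x hx
      by_cases hc : x ∈ closure Γ
      · exact Or.inl (hsub x hx hc)
      · exact Or.inr hc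
    obtain ⟨z, hzS, hz⟩ := hSpc Γ (closure Γ)ᶜ hΓ_open (isClosed_closure.isOpen_compl)
      hcover ⟨_, h1S, honeΓ⟩ ⟨y, hyS, hyn⟩
    exact hz.2 (subset_closure hz.1)
  exact (hΓ_mem κ).mp (hsub κ hconn (hclosure hconn))
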